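/- arXiv:1501.03436 — 2 statements merged into one kernel-verified Lean document; each statement's English description precedes it below -/
import Mathlib

section
/- Let G be a connected finite simple graph on n ≥ 2 vertices and let X be a metric space with at least two points. If λ(G, X) = n/(n−1), then G is the complete graph on its n vertices (every pair of distinct vertices is adjacent). -/
open scoped Classical
open Finset

/-- Degree of a vertex in a finite simple graph. -/
noncomputable def gdeg {V : Type*} [Fintype V] (G : SimpleGraph V) (v : V) : ℕ :=
  (G.neighborSet v).ncard

/-- The volume of a finite simple graph: the sum of the degrees of all vertices. -/
noncomputable def gvol {V : Type*} [Fintype V] (G : SimpleGraph V) : ℕ :=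
  ∑ v, gdeg G v

/-- The Rayleigh-type quotient `R_f(G, X)` for an embedding `f : V(G) → X` where `X`
carries a distance function `d`.  The sum over ordered pairs of adjacent vertices divided
by `2` is the sum over edges of `G`; the sum over ordered pairs of distinct vertices divided
by `2` is the sum over unordered pairs of distinct vertices of `G`. -/
noncomputable def Rf {V X : Type*} [Fintype V] (G : SimpleGraph V) (d : X → X → ℝ)
    (f : V → X) : ℝ :=
  ((gvol G : ℝ) * ((∑ u, ∑ v, if G.Adj u v then d (f u) (f v) ^ 2 else 0) / 2)) /
    ((∑ u, ∑ v, if u ≠ v then d (f u) (f v) ^ 2 * (gdeg G u : ℝ) * (gdeg G v : ℝ) else 0) / 2)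

/-- `lam G d` is `λ(G, X)`: the infimum of `R_f(G, X)` over nonconstant `f : V(G) → X`. -/
noncomputable def lam {V X : Type*} [Fintype V] (G : SimpleGraph V) (d : X → X → ℝ) : ℝ :=
  sInf {r | ∃ f : V → X, (∃ u v, f u ≠ f v) ∧ r = Rf G d f}

/-- The diameter of a finite simple graph: the maximum shortest-path distance over pairs. -/
noncomputable def gDiam {V : Type*} [Fintype V] (H : SimpleGraph V) : ℕ :=
  Finset.univ.sup fun p : V × V => H.dist p.1 p.2

/-- The maximum degree of a finite simple graph. -/
noncomputable def gMaxDeg {V : Type*} [Fintype V] (G : SimpleGraph V) : ℕ :=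
  Finset.univ.sup (gdeg G)

/-- The minimum degree of a finite simple graph. -/
noncomputable def gMinDeg {V : Type*} [Fintype V] (G : SimpleGraph V) : ℕ :=
  sInf (Set.range (gdeg G))

noncomputable def chi {V : Type*} (p : V → Prop) : V → ℝ := fun v => if p v then 1 else 0

lemma chi_sq {V : Type*} (p : V → Prop) (v : V) : chi p v * chi p v = chi p v := by
  by_cases h : p v <;> simp [chi, h]

lemma chi_sub_sq {V : Type*} (p : V → Prop) (u v : V) :
    (chi p u - chi p v) ^ 2 = chi p u + chi p v - 2 * (chi p u * chi p v) := by
  by_cases hu : p u <;> by_cases hv : p v <;> simp [chi, hu, hv] <;> norm_num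

lemma dist_ind_sq {V X : Type*} [MetricSpace X] (p : V → Prop) (a b : X) (u v : V) :
    dist (if p u then a else b) (if p v then a else b) ^ 2
      = dist a b ^ 2 * (chi p u - chi p v) ^ 2 := by
  by_cases hu : p u <;> by_cases hv : p v <;>
    simp [chi, hu, hv, dist_comm b a] <;> ring

lemma sum_adj_one {V : Type*} [Fintype V] (G : SimpleGraph V) (u : V) :
    ∑ v, (if G.Adj u v then (1:ℝ) else 0) = G.degree u := by
  rw [Finset.sum_boole]
  congr 1
  rw [SimpleGraph.degree, ← SimpleGraph.neighborFinset_eq_filter]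

lemma num_sum {V X : Type*} [Fintype V] [MetricSpace X] (G : SimpleGraph V)
    (p : V → Prop) (a b : X) :
    (∑ u, ∑ v, if G.Adj u v then
        dist (if p u then a else b) (if p v then a else b) ^ 2 else 0)
      = dist a b ^ 2 *
        (2 * (∑ u, chi p u * (G.degree u : ℝ))
          - 2 * (∑ u, ∑ v, if G.Adj u v then chi p u * chi p v else 0)) := by
  have h1 : ∀ u v : V, (if G.Adj u v then
        dist (if p u then a else b) (if p v then a else b) ^ 2 else 0)
      = dist a b ^ 2 * (chi p u * (if G.Adj u v then (1:ℝ) else 0)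
          + chi p v * (if G.Adj u v then (1:ℝ) else 0)
          - 2 * (if G.Adj u v then chi p u * chi p v else 0)) := by
    intro u v
    by_cases h : G.Adj u v
    · simp only [h, if_true, dist_ind_sq p a b u v, chi_sub_sq]; ring
    · simp [h]
  simp_rw [h1, ← Finset.mul_sum]
  congr 1
  have h2 : ∀ u : V, ∑ v, (chi p u * (if G.Adj u v then (1:ℝ) else 0)
        + chi p v * (if G.Adj u v then (1:ℝ) else 0)
        - 2 * (if G.Adj u v then chi p u * chi p v else 0))
      = chi p u * (G.degree u : ℝ)
        + (∑ v, chi p v * (if G.Adj u v then (1:ℝ) else 0))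
        - 2 * ∑ v, (if G.Adj u v then chi p u * chi p v else 0) := by
    intro u
    rw [Finset.sum_sub_distrib, Finset.sum_add_distrib, ← Finset.mul_sum, sum_adj_one,
      ← Finset.mul_sum]
  simp_rw [h2]
  rw [Finset.sum_sub_distrib, Finset.sum_add_distrib]
  have h3 : ∑ u : V, ∑ v, chi p v * (if G.Adj u v then (1:ℝ) else 0)
      = ∑ u, chi p u * (G.degree u : ℝ) := by
    rw [Finset.sum_comm]
    refine Finset.sum_congr rfl fun v _ => ?_
    rw [← Finset.mul_sum]
    congr 1
    simp_rw [G.adj_comm]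
    exact sum_adj_one G v
  rw [h3, ← Finset.mul_sum]
  ring

lemma den_sum {V X : Type*} [Fintype V] [MetricSpace X] (G : SimpleGraph V)
    (p : V → Prop) (a b : X) :
    (∑ u, ∑ v, if u ≠ v then
        dist (if p u then a else b) (if p v then a else b) ^ 2
          * (G.degree u : ℝ) * (G.degree v : ℝ) else 0)
      = dist a b ^ 2 *
        (2 * (∑ u, chi p u * (G.degree u : ℝ)) * (∑ u, (G.degree u : ℝ))
          - 2 * (∑ u, chi p u * (G.degree u : ℝ)) ^ 2) := by
  have h1 : ∀ u v : V, (if u ≠ v then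
        dist (if p u then a else b) (if p v then a else b) ^ 2
          * (G.degree u : ℝ) * (G.degree v : ℝ) else 0)
      = dist a b ^ 2 * (chi p u * (G.degree u : ℝ) * (G.degree v : ℝ)
          + (G.degree u : ℝ) * (chi p v * (G.degree v : ℝ))
          - 2 * (chi p u * (G.degree u : ℝ)) * (chi p v * (G.degree v : ℝ))) := by
    intro u v
    by_cases h : u = v
    · subst h
      rw [if_neg (by simp)]
      linear_combination (2 * dist a b ^ 2 * (G.degree u : ℝ) ^ 2) * chi_sq p u
    · simp only [h, ne_eq, not_false_iff, if_true, dist_ind_sq p a b u v, chi_sub_sq]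
      ring
  simp_rw [h1, ← Finset.mul_sum]
  congr 1
  have h2 : ∀ u : V, ∑ v, (chi p u * (G.degree u : ℝ) * (G.degree v : ℝ)
          + (G.degree u : ℝ) * (chi p v * (G.degree v : ℝ))
          - 2 * (chi p u * (G.degree u : ℝ)) * (chi p v * (G.degree v : ℝ)))
      = chi p u * (G.degree u : ℝ) * (∑ v, (G.degree v : ℝ))
          + (G.degree u : ℝ) * (∑ v, chi p v * (G.degree v : ℝ))
          - 2 * (chi p u * (G.degree u : ℝ)) * (∑ v, chi p v * (G.degree v : ℝ)) := by
    intro u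
    rw [Finset.sum_sub_distrib, Finset.sum_add_distrib, ← Finset.mul_sum, ← Finset.mul_sum,
      ← Finset.mul_sum]
  simp_rw [h2]
  rw [Finset.sum_sub_distrib, Finset.sum_add_distrib, ← Finset.sum_mul, ← Finset.sum_mul,
    ← Finset.sum_mul, ← Finset.mul_sum]
  ring


lemma sum_chi_single {V : Type*} [Fintype V] (w : V) (g : V → ℝ) :
    ∑ u, chi (· = w) u * g u = g w := by
  have h : ∀ u, chi (· = w) u * g u = if u = w then g u else 0 := by
    intro u; by_cases h1 : u = w <;> simp [chi, h1]
  simp_rw [h]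
  simp

lemma sum_chi_pair {V : Type*} [Fintype V] (w₁ w₂ : V) (hne : w₁ ≠ w₂) (g : V → ℝ) :
    ∑ u, chi (fun x => x = w₁ ∨ x = w₂) u * g u = g w₁ + g w₂ := by
  have h : ∀ u, chi (fun x => x = w₁ ∨ x = w₂) u * g u
      = (if u = w₁ then g u else 0) + (if u = w₂ then g u else 0) := by
    intro u
    by_cases h1 : u = w₁ <;> by_cases h2 : u = w₂
    · exact absurd (h1 ▸ h2) hne
    · simp [chi, h1, h2, hne]
    · simp [chi, h1, h2, hne.symm]
    · simp [chi, h1, h2]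
  simp_rw [h, Finset.sum_add_distrib]
  simp

lemma T_singleton {V : Type*} [Fintype V] (G : SimpleGraph V) (w : V) :
    (∑ u, ∑ v, if G.Adj u v then chi (· = w) u * chi (· = w) v else 0) = 0 := by
  refine Finset.sum_eq_zero fun u _ => Finset.sum_eq_zero fun v _ => ?_
  by_cases h : G.Adj u v
  · simp only [h, if_true]
    by_cases hu : u = w
    · by_cases hv : v = w
      · exact absurd (hu.trans hv.symm) h.ne
      · simp [chi, hv]
    · simp [chi, hu]
  · simp [h]

lemma T_pair {V : Type*} [Fintype V] (G : SimpleGraph V) (w₁ w₂ : V) (hne : w₁ ≠ w₂)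
    (hadj : G.Adj w₁ w₂) :
    (∑ u, ∑ v, if G.Adj u v then
        chi (fun x => x = w₁ ∨ x = w₂) u * chi (fun x => x = w₁ ∨ x = w₂) v else 0) = 2 := by
  set P : V → Prop := fun x => x = w₁ ∨ x = w₂ with hP
  have key : ∀ u v : V, (if G.Adj u v then chi P u * chi P v else 0)
      = chi P u * (chi P v * (if G.Adj u v then (1:ℝ) else 0)) := by
    intro u v; by_cases h : G.Adj u v <;> simp [h]
  simp_rw [key, ← Finset.mul_sum]
  rw [sum_chi_pair w₁ w₂ hne]
  rw [sum_chi_pair w₁ w₂ hne, sum_chi_pair w₁ w₂ hne]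
  simp [hadj, hadj.symm, SimpleGraph.irrefl]
  norm_num

lemma gdeg_eq {V : Type*} [Fintype V] (G : SimpleGraph V) (v : V) :
    gdeg G v = G.degree v := by
  rw [gdeg, Set.ncard_eq_toFinset_card']
  rfl

lemma gvol_cast {V : Type*} [Fintype V] (G : SimpleGraph V) :
    (gvol G : ℝ) = ∑ u, (G.degree u : ℝ) := by
  rw [gvol]
  push_cast [gdeg_eq]
  rfl

lemma Rf_eval {V X : Type*} [Fintype V] [MetricSpace X] (G : SimpleGraph V)
    (p : V → Prop) (a b : X) (hab : a ≠ b) (f : V → X)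
    (hf : ∀ v, f v = if p v then a else b)
    (hs : 0 < ∑ u, chi p u * (G.degree u : ℝ))
    (hs' : (∑ u, chi p u * (G.degree u : ℝ)) < ∑ u, (G.degree u : ℝ)) :
    Rf G (fun x y : X => dist x y) f
      = ((∑ u, (G.degree u : ℝ)) * ((∑ u, chi p u * (G.degree u : ℝ))
          - (∑ u, ∑ v, if G.Adj u v then chi p u * chi p v else 0)))
        / ((∑ u, chi p u * (G.degree u : ℝ))
            * ((∑ u, (G.degree u : ℝ)) - (∑ u, chi p u * (G.degree u : ℝ)))) := by
  have hfe : f = fun v => if p v then a else b := funext hf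
  subst hfe
  have hD : (0:ℝ) < dist a b := dist_pos.mpr hab
  set s := ∑ u, chi p u * (G.degree u : ℝ) with hsdef
  set vol := ∑ u, (G.degree u : ℝ) with hvoldef
  set T := ∑ u, ∑ v, if G.Adj u v then chi p u * chi p v else 0 with hTdef
  simp only [Rf, gdeg_eq, gvol_cast]
  rw [num_sum, den_sum, ← hsdef, ← hvoldef, ← hTdef]
  have h1 : (0:ℝ) < dist a b ^ 2 * (2 * s * vol - 2 * s ^ 2) / 2 := by
    nlinarith [mul_pos (mul_pos (pow_pos hD 2) hs) (sub_pos.mpr hs')]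
  have h2 : (0:ℝ) < s * (vol - s) := mul_pos hs (sub_pos.mpr hs')
  rw [div_eq_div_iff h1.ne' h2.ne']
  ring
/-- For a connected finite simple graph `G` on `n ≥ 2` vertices and a metric
space `X` with at least two points, if `λ(G, X) = n / (n - 1)` then `G` is complete. -/
theorem stmt_5 {V : Type*} [Fintype V] (G : SimpleGraph V)
    (hG : G.Connected) (hV : 2 ≤ Fintype.card V)
    (X : Type*) [MetricSpace X] (hX : ∃ a b : X, a ≠ b)
    (hlam : lam G (fun x y : X => dist x y) = (Fintype.card V : ℝ) / ((Fintype.card V : ℝ) - 1)) :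
    ∀ u v : V, u ≠ v → G.Adj u v := by
  obtain ⟨a, b, hab⟩ := hX
  intro u₀ v₀ hne₀
  by_contra hadj₀
  have hD : (0:ℝ) < dist a b := dist_pos.mpr hab
  set n := Fintype.card V with hn
  have hnt : Nontrivial V := Fintype.one_lt_card_iff_nontrivial.mp hV
  have hdeg : ∀ v : V, 0 < G.degree v := by
    intro v
    rw [SimpleGraph.degree_pos_iff_exists_adj]
    obtain ⟨w, hw⟩ := exists_ne v
    obtain ⟨wk⟩ := hG.preconnected v w
    cases wk with
    | nil => exact absurd rfl hw
    | cons h _ => exact ⟨_, h⟩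
  set vol : ℝ := ∑ u, (G.degree u : ℝ) with hvol
  have hn1 : (0:ℝ) < (n:ℝ) - 1 := by
    have : (2:ℝ) ≤ (n:ℝ) := by exact_mod_cast hV
    linarith
  have hlb : ∀ f : V → X, (∃ u v, f u ≠ f v) →
      (n : ℝ)/((n:ℝ)-1) ≤ Rf G (fun x y : X => dist x y) f := by
    intro f hf
    rw [← hlam]
    apply csInf_le
    · refine ⟨0, fun r hr => ?_⟩
      obtain ⟨g, hg, rfl⟩ := hr
      unfold Rf
      apply div_nonneg
      · apply mul_nonneg (Nat.cast_nonneg _)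
        apply div_nonneg _ (by norm_num)
        refine Finset.sum_nonneg fun u _ => Finset.sum_nonneg fun v _ => ?_
        split_ifs
        · positivity
        · exact le_rfl
      · apply div_nonneg _ (by norm_num)
        refine Finset.sum_nonneg fun u _ => Finset.sum_nonneg fun v _ => ?_
        split_ifs
        · positivity
        · exact le_rfl
    · exact ⟨f, hf, rfl⟩
  by_cases hreg : ∀ u : V, n * G.degree u = gvol G
  · -- regular case
    set d := G.degree u₀ with hd
    obtain ⟨w₂, hw₂⟩ := (SimpleGraph.degree_pos_iff_exists_adj G u₀).mp (hdeg u₀)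
    have hw₂v : w₂ ≠ v₀ := by rintro rfl; exact hadj₀ hw₂
    have huw : u₀ ≠ w₂ := hw₂.ne
    have hdw₂ : G.degree w₂ = d := by
      have hn0 : 0 < n := by omega
      exact Nat.eq_of_mul_eq_mul_left hn0 ((hreg w₂).trans (hreg u₀).symm)
    have hdle : d + 2 ≤ n := by
      have hsub : G.neighborFinset u₀ ⊆ univ \ {u₀, v₀} := by
        intro x hx
        rw [SimpleGraph.mem_neighborFinset] at hx
        simp only [Finset.mem_sdiff, Finset.mem_univ, true_and, Finset.mem_insert,
          Finset.mem_singleton]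
        push_neg
        exact ⟨hx.ne', by rintro rfl; exact hadj₀ hx⟩
      have hcard := Finset.card_le_card hsub
      rw [Finset.card_sdiff_of_subset (Finset.subset_univ _), Finset.card_univ,
        Finset.card_pair hne₀, SimpleGraph.card_neighborFinset_eq_degree] at hcard
      omega
    have hd1 : 1 ≤ d := hdeg u₀
    have hn3 : 3 ≤ n := by omega
    have hvold : vol = (n:ℝ) * (d:ℝ) := by
      rw [hvol, ← gvol_cast, ← hreg u₀]
      push_cast
      ring
    set p : V → Prop := fun x => x = u₀ ∨ x = w₂ with hp
    have hσ : (∑ u, chi p u * (G.degree u : ℝ)) = 2 * (d:ℝ) := by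
      rw [hp, sum_chi_pair u₀ w₂ huw, hdw₂]
      ring
    have hdR : (1:ℝ) ≤ (d:ℝ) := by exact_mod_cast hd1
    have hnR : (d:ℝ) + 2 ≤ (n:ℝ) := by exact_mod_cast hdle
    have hspos : (0:ℝ) < ∑ u, chi p u * (G.degree u : ℝ) := by rw [hσ]; linarith
    have hslt : (∑ u, chi p u * (G.degree u : ℝ)) < vol := by
      rw [hσ, hvold]; nlinarith
    set f₀ : V → X := fun v => if p v then a else b with hf₀
    have hle := hlb f₀ ⟨u₀, v₀, by simp [hf₀, hp, hne₀.symm, Ne.symm hw₂v, hab]⟩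
    rw [Rf_eval G p a b hab f₀
      (fun v => by by_cases h : p v <;> simp [hf₀, h]) hspos hslt] at hle
    rw [show (∑ u, ∑ v, if G.Adj u v then chi p u * chi p v else 0) = 2 from
      T_pair G u₀ w₂ huw hw₂] at hle
    rw [hσ, ← hvol, hvold] at hle
    rw [div_le_div_iff₀ hn1 (by nlinarith)] at hle
    nlinarith
  · -- non-regular case
    push_neg at hreg
    obtain ⟨u₂, hu₂⟩ := hreg
    have hex : ∃ u₁ : V, n * G.degree u₁ < gvol G := by
      by_contra hc
      push_neg at hc
      have hsum : ∑ _u : V, gvol G < ∑ u : V, n * G.degree u :=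
        Finset.sum_lt_sum (fun u _ => hc u)
          ⟨u₂, Finset.mem_univ _, lt_of_le_of_ne (hc u₂) (Ne.symm hu₂)⟩
      rw [Finset.sum_const, Finset.card_univ, ← Finset.mul_sum, smul_eq_mul] at hsum
      have : ∑ u : V, G.degree u = gvol G := by
        rw [gvol]; exact Finset.sum_congr rfl fun u _ => (gdeg_eq G u).symm
      rw [this, ← hn] at hsum
      omega
    obtain ⟨u₁, hu₁⟩ := hex
    set p : V → Prop := (· = u₁) with hp
    have hσ : (∑ u, chi p u * (G.degree u : ℝ)) = (G.degree u₁ : ℝ) := by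
      rw [hp, sum_chi_single u₁]
    have hvolR : (n:ℝ) * (G.degree u₁ : ℝ) < vol := by
      rw [hvol, ← gvol_cast]
      exact_mod_cast hu₁
    have hd1 : (1:ℝ) ≤ (G.degree u₁ : ℝ) := by exact_mod_cast hdeg u₁
    have hnR : (2:ℝ) ≤ (n:ℝ) := by exact_mod_cast hV
    have hspos : (0:ℝ) < ∑ u, chi p u * (G.degree u : ℝ) := by rw [hσ]; linarith
    have hslt : (∑ u, chi p u * (G.degree u : ℝ)) < vol := by
      rw [hσ]; nlinarith
    obtain ⟨w, hw⟩ := exists_ne u₁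
    set f₀ : V → X := fun v => if p v then a else b with hf₀
    have hle := hlb f₀ ⟨u₁, w, by simp [hf₀, hp, hw, hab]⟩
    rw [Rf_eval G p a b hab f₀
      (fun v => by by_cases h : p v <;> simp [hf₀, h]) hspos hslt] at hle
    rw [show (∑ u, ∑ v, if G.Adj u v then chi p u * chi p v else 0) = 0 from
      T_singleton G u₁] at hle
    rw [hσ, ← hvol] at hle
    rw [div_le_div_iff₀ hn1 (by nlinarith)] at hle
    nlinarith
end

section
/- Let G be a connected finite simple graph on n ≥ 2 vertices with m edges, maximum degree Δ, minimum degree δ, and diameter D, and let H and H' be connected finite simple graphs on the same vertex set with at least two vertices. Then λ(G, H') ≤ (Δ²/δ²) · (1 + S_G) · λ(G, H), where S_G = (n(n−1)/2 − m) · D². -/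
open scoped Classical
open Finset

section Aux
set_option linter.unusedSectionVars false
variable {V W : Type*} [Fintype V] [Fintype W]

lemma gdeg_eq_degree (G : SimpleGraph V) (v : V) : gdeg G v = G.degree v := by
  rw [gdeg, ← SimpleGraph.card_neighborFinset_eq_degree, SimpleGraph.neighborFinset_def,
    Set.ncard_eq_toFinset_card']

lemma one_le_gdeg (G : SimpleGraph V) (hG : G.Connected) (hn : 2 ≤ Fintype.card V) (v : V) :
    1 ≤ gdeg G v := by
  obtain ⟨u, hu⟩ := Fintype.exists_ne_of_one_lt_card hn v
  obtain ⟨p⟩ := hG.preconnected v u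
  rw [gdeg_eq_degree]
  cases p with
  | nil => exact absurd rfl hu.symm
  | cons h q => exact (G.degree_pos_iff_exists_adj v).mpr ⟨_, h⟩

lemma gvol_cast_s9 (G : SimpleGraph V) : (gvol G : ℝ) = 2 * (G.edgeSet.ncard : ℝ) := by
  have h1 : gvol G = ∑ v, G.degree v := Finset.sum_congr rfl fun v _ => gdeg_eq_degree G v
  have h2 : G.edgeSet.ncard = G.edgeFinset.card := by
    rw [Set.ncard_eq_toFinset_card']
    congr 1
  rw [h1, SimpleGraph.sum_degrees_eq_twice_card_edges, h2]
  push_cast; ring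

lemma listCS (l : List ℝ) : l.sum ^ 2 ≤ l.length * (l.map (fun x => x ^ 2)).sum := by
  induction l with
  | nil => simp
  | cons a l ih =>
    simp only [List.sum_cons, List.length_cons, List.map_cons, Nat.cast_add, Nat.cast_one]
    rcases Nat.eq_zero_or_pos l.length with h0 | hpos
    · obtain rfl : l = [] := List.length_eq_zero_iff.mp h0
      simp
    · have hn : (0:ℝ) < l.length := by exact_mod_cast hpos
      nlinarith [ih, sq_nonneg ((l.length : ℝ) * a - l.sum),
        mul_le_mul_of_nonneg_left ih hn.le]

lemma dist_le_darts_sum (H : SimpleGraph W) (hH : H.Connected) {G : SimpleGraph V} (f : V → W)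
    {u v : V} (p : G.Walk u v) :
    H.dist (f u) (f v) ≤ (p.darts.map fun dt => H.dist (f dt.toProd.1) (f dt.toProd.2)).sum := by
  induction p with
  | nil => simp [SimpleGraph.dist_self]
  | @cons a b c h q ih =>
    rw [SimpleGraph.Walk.darts_cons, List.map_cons, List.sum_cons]
    calc H.dist (f a) (f c) ≤ H.dist (f a) (f b) + H.dist (f b) (f c) := hH.dist_triangle
      _ ≤ H.dist (f a) (f b) +
          (q.darts.map fun dt => H.dist (f dt.toProd.1) (f dt.toProd.2)).sum :=
        Nat.add_le_add_left ih _

lemma darts_sum_le (G : SimpleGraph V) (w : V → V → ℝ) (hw : ∀ u v, 0 ≤ w u v)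
    {u v : V} (p : G.Walk u v) (hp : p.IsPath) :
    (p.darts.map fun dt => w dt.toProd.1 dt.toProd.2).sum ≤
      ∑ a, ∑ b, if G.Adj a b then w a b else 0 := by
  have h2 : (p.darts.map SimpleGraph.Dart.edge).Nodup := hp.isTrail.edges_nodup
  have hnd : p.darts.Nodup := h2.of_map _
  have hsum : ∑ a, ∑ b, (if G.Adj a b then w a b else 0) =
      ∑ q ∈ (Finset.univ ×ˢ Finset.univ).filter (fun q : V × V => G.Adj q.1 q.2), w q.1 q.2 := by
    rw [Finset.sum_filter, ← Finset.sum_product']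
  rw [hsum]
  calc (p.darts.map fun dt => w dt.toProd.1 dt.toProd.2).sum
      = ∑ dt ∈ p.darts.toFinset, w dt.toProd.1 dt.toProd.2 :=
        (List.sum_toFinset _ hnd).symm
    _ = ∑ q ∈ p.darts.toFinset.image SimpleGraph.Dart.toProd, w q.1 q.2 := by
        rw [Finset.sum_image (fun x _ y _ hxy => SimpleGraph.Dart.toProd_injective hxy)]
    _ ≤ ∑ q ∈ (Finset.univ ×ˢ Finset.univ).filter (fun q : V × V => G.Adj q.1 q.2), w q.1 q.2 := by
        refine Finset.sum_le_sum_of_subset_of_nonneg ?_ (fun q _ _ => hw _ _)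
        intro q hq
        simp only [Finset.mem_image, List.mem_toFinset] at hq
        obtain ⟨dt, _, rfl⟩ := hq
        simp only [Finset.mem_filter, Finset.mem_product, Finset.mem_univ, true_and]
        exact dt.adj

/-- The chaining bound for a nonadjacent pair. -/
lemma pair_bound (G : SimpleGraph V) (hG : G.Connected) (H : SimpleGraph W) (hH : H.Connected)
    (f : V → W) {u v : V} (hne : u ≠ v) (hnadj : ¬ G.Adj u v) :
    ((H.dist (f u) (f v) : ℝ)) ^ 2 ≤ ((gDiam G : ℝ) ^ 2 / 2) *
      (∑ a, ∑ b, if G.Adj a b then ((H.dist (f a) (f b) : ℝ)) ^ 2 else 0) := by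
  set T : ℝ := ∑ a, ∑ b, if G.Adj a b then ((H.dist (f a) (f b) : ℝ)) ^ 2 else 0 with hT
  have hT0 : 0 ≤ T := by
    refine Finset.sum_nonneg fun a _ => Finset.sum_nonneg fun b _ => ?_
    split <;> positivity
  obtain ⟨p0, hp0⟩ := hG.exists_walk_length_eq_dist u v
  set p := p0.bypass with hp
  have hpath : p.IsPath := p0.bypass_isPath
  have hDdist : G.dist u v ≤ gDiam G := Finset.le_sup (f := fun q : V × V => G.dist q.1 q.2)
    (Finset.mem_univ (u, v))
  have hlen : p.length ≤ gDiam G := le_trans (hp0 ▸ p0.length_bypass_le) hDdist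
  have hdist2 : 2 ≤ G.dist u v := by
    have h1 : 0 < G.dist u v := hG.pos_dist_of_ne hne
    have h2 : G.dist u v ≠ 1 := fun h => hnadj (SimpleGraph.dist_eq_one_iff_adj.mp h)
    omega
  have hD2 : (2 : ℝ) ≤ (gDiam G : ℝ) := by
    exact_mod_cast le_trans hdist2 hDdist
  set l : List ℝ := p.darts.map fun dt => ((H.dist (f dt.toProd.1) (f dt.toProd.2) : ℝ)) with hl
  have hstep1 : ((H.dist (f u) (f v) : ℝ)) ≤ l.sum := by
    have := dist_le_darts_sum H hH f p
    calc ((H.dist (f u) (f v) : ℝ))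
        ≤ (((p.darts.map fun dt => H.dist (f dt.toProd.1) (f dt.toProd.2)).sum : ℕ) : ℝ) := by
          exact_mod_cast this
      _ = l.sum := by rw [hl, Nat.cast_list_sum, List.map_map]; rfl
  have hsq : ((H.dist (f u) (f v) : ℝ)) ^ 2 ≤ l.sum ^ 2 := by
    have h0 : (0:ℝ) ≤ ((H.dist (f u) (f v) : ℝ)) := by positivity
    exact pow_le_pow_left₀ h0 hstep1 2
  have hcs : l.sum ^ 2 ≤ l.length * (l.map (fun x => x ^ 2)).sum := listCS l
  have hlenl : (l.length : ℝ) ≤ (gDiam G : ℝ) := by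
    rw [hl, List.length_map, p.length_darts]
    exact_mod_cast hlen
  have hmapsum : (l.map (fun x => x ^ 2)).sum ≤ T := by
    rw [hl, List.map_map]
    exact darts_sum_le G (fun a b => ((H.dist (f a) (f b) : ℝ)) ^ 2)
      (fun a b => by positivity) p hpath
  have hms0 : 0 ≤ (l.map (fun x => x ^ 2)).sum :=
    List.sum_nonneg fun x hx => by
      obtain ⟨y, _, rfl⟩ := List.mem_map.mp hx; positivity
  calc ((H.dist (f u) (f v) : ℝ)) ^ 2 ≤ l.sum ^ 2 := hsq
    _ ≤ l.length * (l.map (fun x => x ^ 2)).sum := hcs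
    _ ≤ (gDiam G : ℝ) * T := by
        apply mul_le_mul hlenl hmapsum hms0 (by linarith)
    _ ≤ ((gDiam G : ℝ) ^ 2 / 2) * T := by
        apply mul_le_mul_of_nonneg_right ?_ hT0
        nlinarith

/-- If `f` is constant on every dart of a walk, its endpoints agree. -/
lemma walk_const {G : SimpleGraph V} (f : V → W) {u v : V} (p : G.Walk u v)
    (h : ∀ dt ∈ p.darts, f dt.toProd.1 = f dt.toProd.2) : f u = f v := by
  induction p with
  | nil => rfl
  | @cons a b c hab q ih =>
    have h1 : f a = f b := h ⟨(a,b), hab⟩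
      (by rw [SimpleGraph.Walk.darts_cons]; exact List.mem_cons_self)
    have h2 : f b = f c := ih fun dt hdt => h dt
      (by rw [SimpleGraph.Walk.darts_cons]; exact List.mem_cons_of_mem _ hdt)
    exact h1.trans h2

/-- A nonconstant map on a connected graph differs across some edge. -/
lemma exists_hot_edge {G : SimpleGraph V} (hG : G.Connected) (f : V → W)
    (hf : ∃ u v, f u ≠ f v) : ∃ a b, G.Adj a b ∧ f a ≠ f b := by
  obtain ⟨x, y, hxy⟩ := hf
  obtain ⟨p⟩ := hG.preconnected x y
  by_contra hcon
  push_neg at hcon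
  exact hxy (walk_const f p fun dt _ => hcon _ _ dt.adj)

/-- Double sums of pointwise-nonnegative families are bounded below by one term. -/
lemma double_sum_ge {g : V → V → ℝ} (hg : ∀ u v, 0 ≤ g u v) (a b : V) :
    g a b ≤ ∑ u, ∑ v, g u v := by
  calc g a b ≤ ∑ v, g a v := Finset.single_le_sum (fun v _ => hg a v) (Finset.mem_univ b)
    _ ≤ ∑ u, ∑ v, g u v := Finset.single_le_sum
        (fun u _ => Finset.sum_nonneg fun v _ => hg u v) (Finset.mem_univ a)

lemma Rf_nonneg (G : SimpleGraph V) (d : W → W → ℝ) (hd : ∀ i j, 0 ≤ d i j) (f : V → W) :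
    0 ≤ Rf G d f := by
  unfold Rf
  have h1 : (0:ℝ) ≤ ∑ u, ∑ v, if G.Adj u v then d (f u) (f v) ^ 2 else 0 := by
    refine Finset.sum_nonneg fun a _ => Finset.sum_nonneg fun b _ => ?_
    split <;> positivity
  have h2 : (0:ℝ) ≤ ∑ u, ∑ v,
      if u ≠ v then d (f u) (f v) ^ 2 * (gdeg G u : ℝ) * (gdeg G v : ℝ) else 0 := by
    refine Finset.sum_nonneg fun a _ => Finset.sum_nonneg fun b _ => ?_
    split <;> positivity
  positivity

/-- Counting identity: sums of constants over distinct / adjacent pairs. -/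
lemma count_sum (G : SimpleGraph V) (c : ℝ) :
    (∑ u : V, ∑ v : V, if u ≠ v then c else 0) -
      (∑ u : V, ∑ v : V, if G.Adj u v then c else 0) =
      c * ((Fintype.card V : ℝ) * ((Fintype.card V : ℝ) - 1) - (gvol G : ℝ)) := by
  have hcard : 1 ≤ Fintype.card V ∨ Fintype.card V = 0 := by omega
  have hne : ∀ u : V, (∑ v : V, if u ≠ v then c else 0) = c * ((Fintype.card V : ℝ) - 1) := by
    intro u
    rw [← Finset.sum_filter]
    have : (Finset.univ.filter fun v => u ≠ v) = Finset.univ.erase u := by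
      ext x; simp [ne_comm]
    rw [this, Finset.sum_const, Finset.card_erase_of_mem (Finset.mem_univ u), Finset.card_univ]
    have h1 : 1 ≤ Fintype.card V := Fintype.card_pos_iff.mpr ⟨u⟩
    rw [nsmul_eq_mul, Nat.cast_sub h1]
    push_cast; ring
  have hadj : ∀ u : V, (∑ v : V, if G.Adj u v then c else 0) = c * (gdeg G u : ℝ) := by
    intro u
    rw [← Finset.sum_filter]
    have : (Finset.univ.filter fun v => G.Adj u v) = G.neighborFinset u := by
      ext x; simp [SimpleGraph.mem_neighborFinset]
    rw [this, Finset.sum_const, SimpleGraph.card_neighborFinset_eq_degree, ← gdeg_eq_degree,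
      nsmul_eq_mul]
    ring
  rw [Finset.sum_congr rfl fun u _ => hne u, Finset.sum_congr rfl fun u _ => hadj u,
    Finset.sum_const, Finset.card_univ, ← Finset.mul_sum]
  have : (gvol G : ℝ) = ∑ u : V, (gdeg G u : ℝ) := by rw [gvol]; push_cast; rfl
  rw [this, nsmul_eq_mul]
  ring

end Aux

section Est
set_option linter.unusedSectionVars false
variable {V W : Type*} [Fintype V] [Fintype W]

/-- Lower bound: every Rayleigh quotient into `H` is at least `vol/(Δ²(1+S))`. -/
lemma est_lower (G : SimpleGraph V) (H : SimpleGraph W) (hG : G.Connected) (hH : H.Connected)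
    (hn : 2 ≤ Fintype.card V) (f : V → W) (hf : ∃ u v, f u ≠ f v) :
    (gvol G : ℝ) / ((gMaxDeg G : ℝ) ^ 2 *
        (1 + ((Fintype.card V : ℝ) * ((Fintype.card V : ℝ) - 1) / 2 - (G.edgeSet.ncard : ℝ))
          * (gDiam G : ℝ) ^ 2)) ≤ Rf G (fun i j => (H.dist i j : ℝ)) f := by
  set n : ℝ := (Fintype.card V : ℝ) with hn'
  set D : ℝ := (gDiam G : ℝ) with hD'
  set Δ : ℝ := (gMaxDeg G : ℝ) with hΔ'
  set m : ℝ := (G.edgeSet.ncard : ℝ) with hm'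
  set S : ℝ := (n * (n - 1) / 2 - m) * D ^ 2 with hS'
  set q : V → V → ℝ := fun a b => ((H.dist (f a) (f b) : ℝ)) ^ 2 with hq
  have hq0 : ∀ a b, 0 ≤ q a b := fun a b => by positivity
  set T : ℝ := ∑ a, ∑ b, if G.Adj a b then q a b else 0 with hTdef
  set P : ℝ := ∑ a, ∑ b, if a ≠ b then q a b else 0 with hPdef
  set Den : ℝ := ∑ a, ∑ b,
    if a ≠ b then q a b * (gdeg G a : ℝ) * (gdeg G b : ℝ) else 0 with hDendef
  -- basic positivity facts
  have hdegle : ∀ v : V, (gdeg G v : ℝ) ≤ Δ := fun v => by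
    rw [hΔ']
    exact_mod_cast Finset.le_sup (f := gdeg G) (Finset.mem_univ v)
  have hdeg1 : ∀ v : V, (1 : ℝ) ≤ (gdeg G v : ℝ) := fun v => by
    exact_mod_cast one_le_gdeg G hG hn v
  obtain ⟨a, b, hab, hfab⟩ := exists_hot_edge hG f hf
  have hΔ1 : (1:ℝ) ≤ Δ := le_trans (hdeg1 a) (hdegle a)
  have hqab : (1:ℝ) ≤ q a b := by
    have h1 : 0 < H.dist (f a) (f b) := hH.pos_dist_of_ne hfab
    have h2 : (1:ℝ) ≤ (H.dist (f a) (f b) : ℝ) := by exact_mod_cast h1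
    show (1:ℝ) ≤ ((H.dist (f a) (f b) : ℝ)) ^ 2
    nlinarith
  have hT0 : 0 ≤ T := Finset.sum_nonneg fun u _ => Finset.sum_nonneg fun v _ => by
    split <;> [exact hq0 u v; rfl]
  have hTpos : 0 < T := by
    have := double_sum_ge (g := fun u v => if G.Adj u v then q u v else 0)
      (fun u v => by split <;> [exact hq0 u v; rfl]) a b
    rw [if_pos hab] at this
    calc (0:ℝ) < 1 := one_pos
      _ ≤ q a b := hqab
      _ ≤ T := this
  have hDenpos : 0 < Den := by
    have hterm : (1:ℝ) ≤ q a b * (gdeg G a : ℝ) * (gdeg G b : ℝ) := by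
      have h4 : (1:ℝ) * 1 * 1 ≤ q a b * (gdeg G a : ℝ) * (gdeg G b : ℝ) := by
        apply mul_le_mul (mul_le_mul hqab (hdeg1 a) zero_le_one (by linarith [hqab]))
          (hdeg1 b) zero_le_one
        nlinarith [hqab, hdeg1 a]
      linarith
    have := double_sum_ge
      (g := fun u v => if u ≠ v then q u v * (gdeg G u : ℝ) * (gdeg G v : ℝ) else 0)
      (fun u v => by
        split
        · exact mul_nonneg (mul_nonneg (hq0 u v) (Nat.cast_nonneg _)) (Nat.cast_nonneg _)
        · rfl) a b
    rw [if_pos hab.ne] at this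
    linarith
  -- S ≥ 0
  have hmle : m ≤ n * (n - 1) / 2 := by
    have h1 := G.card_edgeFinset_le_card_choose_two
    have h2 : m = (G.edgeFinset.card : ℝ) := by
      rw [hm']; congr 1; rw [Set.ncard_eq_toFinset_card']; congr 1
    have h3 : ((Fintype.card V).choose 2 : ℝ)
        = (Fintype.card V : ℝ) * ((Fintype.card V : ℝ) - 1) / 2 := Nat.cast_choose_two ℝ _
    rw [h2, hn', ← h3]
    exact_mod_cast h1
  have hS0 : 0 ≤ S := by
    rw [hS']; apply mul_nonneg (by linarith) (by positivity)
  have hvol2m : (gvol G : ℝ) = 2 * m := gvol_cast_s9 G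
  have hvolpos : (0:ℝ) < (gvol G : ℝ) := by
    have : (1:ℝ) ≤ (gdeg G a : ℝ) := hdeg1 a
    have h2 : (gdeg G a : ℝ) ≤ (gvol G : ℝ) := by
      have : gdeg G a ≤ gvol G :=
        Finset.single_le_sum (f := gdeg G) (fun v _ => Nat.zero_le _) (Finset.mem_univ a)
      exact_mod_cast this
    linarith
  -- Den ≤ Δ² (1+S) T
  have hDen_le : Den ≤ Δ ^ 2 * (1 + S) * T := by
    have step1 : Den ≤ Δ ^ 2 * P := by
      rw [hPdef, Finset.mul_sum]
      refine Finset.sum_le_sum fun u _ => ?_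
      rw [Finset.mul_sum]
      refine Finset.sum_le_sum fun v _ => ?_
      by_cases h : u ≠ v
      · rw [if_pos h, if_pos h]
        calc q u v * (gdeg G u : ℝ) * (gdeg G v : ℝ)
            = q u v * ((gdeg G u : ℝ) * (gdeg G v : ℝ)) := by ring
          _ ≤ q u v * (Δ * Δ) := by
              apply mul_le_mul_of_nonneg_left ?_ (hq0 u v)
              exact mul_le_mul (hdegle u) (hdegle v) (Nat.cast_nonneg _)
                (by linarith [hΔ1])
          _ = Δ ^ 2 * q u v := by ring
      · rw [if_neg h, if_neg h, mul_zero]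
    have split2 : P = T + ∑ u, ∑ v, (if u ≠ v ∧ ¬ G.Adj u v then q u v else 0) := by
      rw [hPdef, hTdef, ← Finset.sum_add_distrib]
      refine Finset.sum_congr rfl fun u _ => ?_
      rw [← Finset.sum_add_distrib]
      refine Finset.sum_congr rfl fun v _ => ?_
      by_cases h1 : G.Adj u v
      · rw [if_pos h1, if_pos h1.ne, if_neg (by tauto)]; ring
      · by_cases h2 : u = v
        · rw [if_neg h1, if_neg (by tauto), if_neg (by tauto)]; ring
        · rw [if_neg h1, if_pos h2, if_pos ⟨h2, h1⟩]; ring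
    have step2 : ∑ u, ∑ v, (if u ≠ v ∧ ¬ G.Adj u v then q u v else 0) ≤ S * T := by
      have hb : ∀ u v : V, (if u ≠ v ∧ ¬ G.Adj u v then q u v else 0) ≤
          (if u ≠ v ∧ ¬ G.Adj u v then (D ^ 2 / 2) * T else 0) := by
        intro u v
        by_cases h : u ≠ v ∧ ¬ G.Adj u v
        · rw [if_pos h, if_pos h]
          exact pair_bound G hG H hH f h.1 h.2
        · rw [if_neg h, if_neg h]
      have hsum : ∑ u, ∑ v, (if u ≠ v ∧ ¬ G.Adj u v then (D ^ 2 / 2) * T else 0) =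
          (D ^ 2 / 2) * T * (n * (n - 1) - (gvol G : ℝ)) := by
        have hpt : ∀ u v : V, (if u ≠ v ∧ ¬ G.Adj u v then (D ^ 2 / 2) * T else 0) =
            (if u ≠ v then (D ^ 2 / 2) * T else 0) - (if G.Adj u v then (D ^ 2 / 2) * T else 0) := by
          intro u v
          by_cases h1 : G.Adj u v
          · rw [if_pos h1, if_pos h1.ne, if_neg (by tauto)]; ring
          · by_cases h2 : u = v
            · rw [if_neg h1, if_neg (by tauto), if_neg (by tauto)]; ring
            · rw [if_neg h1, if_pos h2, if_pos ⟨h2, h1⟩]; ring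
        calc ∑ u, ∑ v, (if u ≠ v ∧ ¬ G.Adj u v then (D ^ 2 / 2) * T else 0)
            = (∑ u : V, ∑ v : V, if u ≠ v then (D ^ 2 / 2) * T else 0) -
              (∑ u : V, ∑ v : V, if G.Adj u v then (D ^ 2 / 2) * T else 0) := by
              rw [← Finset.sum_sub_distrib]
              refine Finset.sum_congr rfl fun u _ => ?_
              rw [← Finset.sum_sub_distrib]
              exact Finset.sum_congr rfl fun v _ => hpt u v
          _ = (D ^ 2 / 2) * T * (n * (n - 1) - (gvol G : ℝ)) := count_sum G _
      calc ∑ u, ∑ v, (if u ≠ v ∧ ¬ G.Adj u v then q u v else 0)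
          ≤ ∑ u, ∑ v, (if u ≠ v ∧ ¬ G.Adj u v then (D ^ 2 / 2) * T else 0) :=
            Finset.sum_le_sum fun u _ => Finset.sum_le_sum fun v _ => hb u v
        _ = (D ^ 2 / 2) * T * (n * (n - 1) - (gvol G : ℝ)) := hsum
        _ = S * T := by rw [hvol2m, hS']; ring
    calc Den ≤ Δ ^ 2 * P := step1
      _ = Δ ^ 2 * (T + ∑ u, ∑ v, (if u ≠ v ∧ ¬ G.Adj u v then q u v else 0)) := by rw [split2]
      _ ≤ Δ ^ 2 * (T + S * T) := by
          apply mul_le_mul_of_nonneg_left _ (by positivity)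
          linarith [step2]
      _ = Δ ^ 2 * (1 + S) * T := by ring
  -- conclude
  have hRf : Rf G (fun i j => (H.dist i j : ℝ)) f = (gvol G : ℝ) * T / Den := by
    have hrfl : Rf G (fun i j => (H.dist i j : ℝ)) f
        = ((gvol G : ℝ) * (T / 2)) / (Den / 2) := rfl
    rw [hrfl, div_eq_div_iff (half_pos hDenpos).ne' hDenpos.ne']
    ring
  rw [hRf, le_div_iff₀ hDenpos]
  have hC : (0:ℝ) < Δ ^ 2 * (1 + S) := by nlinarith [hΔ1, hS0]
  calc (gvol G : ℝ) / (Δ ^ 2 * (1 + S)) * Den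
      ≤ (gvol G : ℝ) / (Δ ^ 2 * (1 + S)) * (Δ ^ 2 * (1 + S) * T) := by
        apply mul_le_mul_of_nonneg_left hDen_le (div_nonneg hvolpos.le hC.le)
    _ = (gvol G : ℝ) * T := by
        field_simp
end Est

section Est2
set_option linter.unusedSectionVars false
variable {V W : Type*} [Fintype V] [Fintype W]

/-- Upper bound: a suitable two-valued test map has Rayleigh quotient at most `vol/δ²`. -/
lemma est_upper (G : SimpleGraph V) (H' : SimpleGraph W) (hG : G.Connected) (hH' : H'.Connected)
    (hn : 2 ≤ Fintype.card V) (hk : 2 ≤ Fintype.card W) (f : V → W)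
    (hf : ∃ u v, f u ≠ f v) :
    Rf G (fun i j => (H'.dist i j : ℝ)) f ≤ (gvol G : ℝ) / (gMinDeg G : ℝ) ^ 2 := by
  set δ : ℝ := (gMinDeg G : ℝ) with hδ'
  set q : V → V → ℝ := fun a b => ((H'.dist (f a) (f b) : ℝ)) ^ 2 with hq
  have hq0 : ∀ a b, 0 ≤ q a b := fun a b => by positivity
  set T : ℝ := ∑ a, ∑ b, if G.Adj a b then q a b else 0 with hTdef
  set P : ℝ := ∑ a, ∑ b, if a ≠ b then q a b else 0 with hPdef
  set Den : ℝ := ∑ a, ∑ b,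
    if a ≠ b then q a b * (gdeg G a : ℝ) * (gdeg G b : ℝ) else 0 with hDendef
  -- degree facts
  have hV : Nonempty V := Fintype.card_pos_iff.mp (by omega)
  obtain ⟨v0⟩ := hV
  have hδ1 : (1:ℝ) ≤ δ := by
    rw [hδ']
    have hne : (Set.range (gdeg G)).Nonempty := ⟨_, ⟨v0, rfl⟩⟩
    obtain ⟨v, hv⟩ := Nat.sInf_mem hne
    have : 1 ≤ gMinDeg G := by
      rw [gMinDeg, ← hv]; exact one_le_gdeg G hG hn v
    exact_mod_cast this
  have hδle : ∀ v : V, δ ≤ (gdeg G v : ℝ) := fun v => by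
    rw [hδ']
    exact_mod_cast Nat.sInf_le (Set.mem_range_self v)
  -- sums
  have hT0 : 0 ≤ T := Finset.sum_nonneg fun u _ => Finset.sum_nonneg fun v _ => by
    split <;> [exact hq0 u v; rfl]
  obtain ⟨x, y, hxy⟩ := hf
  have hP0 : 0 ≤ P := Finset.sum_nonneg fun u _ => Finset.sum_nonneg fun v _ => by
    split <;> [exact hq0 u v; rfl]
  have hPpos : 0 < P := by
    have hxyne : x ≠ y := fun h => hxy (by rw [h])
    have hq1 : (1:ℝ) ≤ q x y := by
      have h1 : 0 < H'.dist (f x) (f y) := hH'.pos_dist_of_ne hxy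
      have h2 : (1:ℝ) ≤ (H'.dist (f x) (f y) : ℝ) := by exact_mod_cast h1
      show (1:ℝ) ≤ ((H'.dist (f x) (f y) : ℝ)) ^ 2
      nlinarith
    have := double_sum_ge (g := fun u v => if u ≠ v then q u v else 0)
      (fun u v => by split <;> [exact hq0 u v; rfl]) x y
    rw [if_pos hxyne] at this
    linarith
  have hTP : T ≤ P := by
    refine Finset.sum_le_sum fun u _ => Finset.sum_le_sum fun v _ => ?_
    by_cases h : G.Adj u v
    · rw [if_pos h, if_pos h.ne]
    · rw [if_neg h]
      split <;> [exact hq0 u v; rfl]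
  have hDen_ge : δ ^ 2 * P ≤ Den := by
    rw [hPdef, Finset.mul_sum]
    refine Finset.sum_le_sum fun u _ => ?_
    rw [Finset.mul_sum]
    refine Finset.sum_le_sum fun v _ => ?_
    by_cases h : u ≠ v
    · rw [if_pos h, if_pos h]
      calc δ ^ 2 * q u v = q u v * (δ * δ) := by ring
        _ ≤ q u v * ((gdeg G u : ℝ) * (gdeg G v : ℝ)) := by
            apply mul_le_mul_of_nonneg_left ?_ (hq0 u v)
            exact mul_le_mul (hδle u) (hδle v) (by linarith) (Nat.cast_nonneg _)
        _ = q u v * (gdeg G u : ℝ) * (gdeg G v : ℝ) := by ring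
    · rw [if_neg h, if_neg h, mul_zero]
  have hδsqpos : (0:ℝ) < δ ^ 2 := by nlinarith
  have hDenpos : 0 < Den := lt_of_lt_of_le (by nlinarith) hDen_ge
  have hvol0 : (0:ℝ) ≤ (gvol G : ℝ) := Nat.cast_nonneg _
  have hrfl : Rf G (fun i j => (H'.dist i j : ℝ)) f
      = ((gvol G : ℝ) * (T / 2)) / (Den / 2) := rfl
  rw [hrfl, div_le_div_iff₀ (half_pos hDenpos) hδsqpos]
  have key : δ ^ 2 * T ≤ Den := le_trans (by nlinarith) hDen_ge
  nlinarith [mul_le_mul_of_nonneg_left key hvol0]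

end Est2

/-- For a connected finite simple graph `G` on `n ≥ 2` vertices with `m` edges,
maximum degree `Δ`, minimum degree `δ` and diameter `D`, and connected graphs `H`, `H'` on
the same vertex set with at least two vertices,
`λ(G, H') ≤ (Δ²/δ²)(1 + S_G) λ(G, H)` where `S_G = (n(n-1)/2 - m) D²`. -/
theorem stmt_9 {V W : Type*} [Fintype V] [Fintype W]
    (G : SimpleGraph V) (H H' : SimpleGraph W)
    (hG : G.Connected) (hH : H.Connected) (hH' : H'.Connected)
    (hn : 2 ≤ Fintype.card V) (hk : 2 ≤ Fintype.card W) :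
    lam G (fun i j => (H'.dist i j : ℝ)) ≤
      (gMaxDeg G : ℝ) ^ 2 / (gMinDeg G : ℝ) ^ 2 *
        (1 + ((Fintype.card V : ℝ) * ((Fintype.card V : ℝ) - 1) / 2 - (G.edgeSet.ncard : ℝ))
            * (gDiam G : ℝ) ^ 2) *
        lam G (fun i j => (H.dist i j : ℝ)) := by
  -- notation
  set n : ℝ := (Fintype.card V : ℝ) with hn'
  set D : ℝ := (gDiam G : ℝ) with hD'
  set Δ : ℝ := (gMaxDeg G : ℝ) with hΔ'
  set δ : ℝ := (gMinDeg G : ℝ) with hδ'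
  set m : ℝ := (G.edgeSet.ncard : ℝ) with hm'
  set S : ℝ := (n * (n - 1) / 2 - m) * D ^ 2 with hS'
  -- a nonconstant test function
  have hV : Nonempty V := Fintype.card_pos_iff.mp (by omega)
  obtain ⟨v0⟩ := hV
  have hW : Nontrivial W := Fintype.one_lt_card_iff_nontrivial.mp (by omega)
  obtain ⟨w1, w2, hw⟩ := exists_pair_ne W
  have hVnt : Nontrivial V := Fintype.one_lt_card_iff_nontrivial.mp (by omega)
  obtain ⟨v1, hv1⟩ := exists_ne v0
  set f0 : V → W := fun v => if v = v0 then w1 else w2 with hf0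
  have hnc : ∃ u v, f0 u ≠ f0 v := by
    refine ⟨v0, v1, ?_⟩
    rw [hf0]
    simp only [if_pos rfl, if_neg hv1]
    exact hw
  -- basic facts
  have hdeg1 : ∀ v : V, (1 : ℝ) ≤ (gdeg G v : ℝ) := fun v => by
    exact_mod_cast one_le_gdeg G hG hn v
  have hdegle : ∀ v : V, (gdeg G v : ℝ) ≤ Δ := fun v => by
    rw [hΔ']
    exact_mod_cast Finset.le_sup (f := gdeg G) (Finset.mem_univ v)
  have hΔ1 : (1:ℝ) ≤ Δ := le_trans (hdeg1 v0) (hdegle v0)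
  have hδ1 : (1:ℝ) ≤ δ := by
    rw [hδ']
    have hne : (Set.range (gdeg G)).Nonempty := ⟨_, ⟨v0, rfl⟩⟩
    obtain ⟨v, hv⟩ := Nat.sInf_mem hne
    have : 1 ≤ gMinDeg G := by
      rw [gMinDeg, ← hv]; exact one_le_gdeg G hG hn v
    exact_mod_cast this
  have hδle : δ ≤ Δ := by
    rw [hδ', hΔ']
    have : gMinDeg G ≤ gMaxDeg G := by
      have h1 : gMinDeg G ≤ gdeg G v0 := Nat.sInf_le ⟨v0, rfl⟩
      have h2 : gdeg G v0 ≤ gMaxDeg G := Finset.le_sup (f := gdeg G) (Finset.mem_univ v0)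
      omega
    exact_mod_cast this
  have hS0 : 0 ≤ S := by
    rw [hS']
    apply mul_nonneg ?_ (by positivity)
    have h1 := G.card_edgeFinset_le_card_choose_two
    have h2 : m = (G.edgeFinset.card : ℝ) := by
      rw [hm']; congr 1; rw [Set.ncard_eq_toFinset_card']; congr 1
    have h3 : ((Fintype.card V).choose 2 : ℝ)
        = (Fintype.card V : ℝ) * ((Fintype.card V : ℝ) - 1) / 2 := Nat.cast_choose_two ℝ _
    have h4 : m ≤ n * (n - 1) / 2 := by
      rw [h2, hn', ← h3]
      exact_mod_cast h1
    linarith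
  -- lambda bounds
  have hbdd : BddBelow {r | ∃ f : V → W, (∃ u v, f u ≠ f v) ∧
      r = Rf G (fun i j => (H'.dist i j : ℝ)) f} := by
    refine ⟨0, ?_⟩
    rintro r ⟨f, -, rfl⟩
    exact Rf_nonneg G _ (fun i j => Nat.cast_nonneg _) f
  have hup : lam G (fun i j => (H'.dist i j : ℝ)) ≤ (gvol G : ℝ) / δ ^ 2 := by
    have h1 : lam G (fun i j => (H'.dist i j : ℝ)) ≤ Rf G (fun i j => (H'.dist i j : ℝ)) f0 :=
      csInf_le hbdd ⟨f0, hnc, rfl⟩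
    exact le_trans h1 (est_upper G H' hG hH' hn hk f0 hnc)
  have hlow : (gvol G : ℝ) / (Δ ^ 2 * (1 + S)) ≤ lam G (fun i j => (H.dist i j : ℝ)) := by
    refine le_csInf ⟨_, f0, hnc, rfl⟩ ?_
    rintro r ⟨f, hf, rfl⟩
    exact est_lower G H hG hH hn f hf
  -- combine
  have hCpos : (0:ℝ) < Δ ^ 2 * (1 + S) := by nlinarith
  have hδpos : (0:ℝ) < δ := by linarith
  have hkey : (gvol G : ℝ) / δ ^ 2 = Δ ^ 2 / δ ^ 2 * (1 + S) * ((gvol G : ℝ) / (Δ ^ 2 * (1 + S))) := by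
    field_simp
  calc lam G (fun i j => (H'.dist i j : ℝ)) ≤ (gvol G : ℝ) / δ ^ 2 := hup
    _ = Δ ^ 2 / δ ^ 2 * (1 + S) * ((gvol G : ℝ) / (Δ ^ 2 * (1 + S))) := hkey
    _ ≤ Δ ^ 2 / δ ^ 2 * (1 + S) * lam G (fun i j => (H.dist i j : ℝ)) := by
        apply mul_le_mul_of_nonneg_left hlow
        apply mul_nonneg (div_nonneg (by nlinarith) (by nlinarith)) (by linarith)
end
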